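/- Let A be an r × c quaternion matrix with r ≥ 1 and c ≥ 1, and let a denote its first column. Then there exists a unitary quaternion matrix H ∈ ℍ^{r×r} such that the product H * A has first column equal to ‖a‖ times the first standard basis vector: (H * A) i 0 = 0 for all i ≠ 0, and (H * A) 0 0 equals the real quaternion ‖a‖ (in particular it has zero vector part and is nonnegative). -/

import Mathlib

open Matrix

section Aux

local notation "ℍ" => Quaternion ℝ

private lemma star_mul_self'' (q : ℍ) : star q * q = ((‖q‖ ^ 2 : ℝ) : ℍ) := by
  rw [Quaternion.star_mul_self, Quaternion.normSq_eq_norm_mul_self, sq]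

private lemma self_mul_star'' (q : ℍ) : q * star q = ((‖q‖ ^ 2 : ℝ) : ℍ) := by
  rw [Quaternion.self_mul_star, Quaternion.normSq_eq_norm_mul_self, sq]

set_option maxHeartbeats 1000000 in
/-- Vector form of the Householder step. -/
private lemma householder_key (r : ℕ) (z : Fin r) (a : Fin r → ℍ) :
    ∃ H : Matrix (Fin r) (Fin r) ℍ,
      H * Hᴴ = 1 ∧ Hᴴ * H = 1 ∧
      (∀ i : Fin r, i ≠ z → ∑ j, H i j * a j = 0) ∧
      ∑ j, H z j * a j = ((Real.sqrt (∑ i, ‖a i‖ ^ 2) : ℝ) : ℍ) := by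
  classical
  set n : ℝ := Real.sqrt (∑ i, ‖a i‖ ^ 2) with hn_def
  have hsum_nonneg : 0 ≤ ∑ i, ‖a i‖ ^ 2 :=
    Finset.sum_nonneg fun i _ => sq_nonneg _
  have hn2 : n ^ 2 = ∑ i, ‖a i‖ ^ 2 := Real.sq_sqrt hsum_nonneg
  have hn_nonneg : 0 ≤ n := Real.sqrt_nonneg _
  set u : ℍ := if a z = 0 then 1 else (‖a z‖⁻¹ : ℝ) • a z with hu_def
  have hazn : a z ≠ 0 → (‖a z‖ : ℝ) ≠ 0 := fun h => by simpa using h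
  have hu_norm : ‖u‖ = 1 := by
    by_cases h : a z = 0
    · simp [hu_def, h]
    · have h0 := hazn h
      rw [hu_def, if_neg h, norm_smul]
      rw [norm_inv, norm_norm]
      field_simp
  have huu : star u * u = 1 := by
    rw [star_mul_self'', hu_norm]
    norm_num
  have huu' : u * star u = 1 := by
    rw [self_mul_star'', hu_norm]
    norm_num
  set α : ℍ := (n : ℝ) • u with hα_def
  have h1 : star (a z) * α = ((n * ‖a z‖ : ℝ) : ℍ) := by
    by_cases h : a z = 0
    · simp [hα_def, h]
    · have h0 := hazn h
      simp only [hα_def, hu_def, if_neg h, smul_smul, mul_smul_comm, star_mul_self'']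
      rw [Quaternion.smul_coe]
      congr 1
      field_simp
  have h2 : star α * a z = ((n * ‖a z‖ : ℝ) : ℍ) := by
    have h := congrArg star h1
    rw [StarMul.star_mul, star_star, Quaternion.star_coe] at h
    exact h
  have h3 : star α * α = ((n ^ 2 : ℝ) : ℍ) := by
    rw [star_mul_self'', hα_def, norm_smul, hu_norm]
    norm_num [abs_of_nonneg hn_nonneg]
  set v : Fin r → ℍ := fun i => a i - if i = z then α else 0 with hv_def
  set t : ℝ := n ^ 2 - n * ‖a z‖ with ht_def
  have S0 : ∑ j, star (a j) * a j = ((n ^ 2 : ℝ) : ℍ) := by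
    have e : ∀ j : Fin r, star (a j) * a j = ((‖a j‖ ^ 2 : ℝ) : ℍ) :=
      fun j => star_mul_self'' _
    rw [Finset.sum_congr rfl fun j _ => e j, hn2]
    exact (map_sum (algebraMap ℝ ℍ) (fun i => ‖a i‖ ^ 2) Finset.univ).symm
  have S1 : ∑ j, star (v j) * a j = ((t : ℝ) : ℍ) := by
    have e : ∀ j : Fin r, star (v j) * a j
        = star (a j) * a j - (if j = z then star α * a z else 0) := by
      intro j
      by_cases h : j = z <;> simp [hv_def, h, sub_mul]
    rw [Finset.sum_congr rfl fun j _ => e j, Finset.sum_sub_distrib,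
      Finset.sum_ite_eq' Finset.univ z fun _ => star α * a z]
    simp only [Finset.mem_univ, if_true, S0, h2]
    rw [← Quaternion.coe_sub]
  have hvzα : star (v z) * α = ((n * ‖a z‖ - n ^ 2 : ℝ) : ℍ) := by
    have e : v z = a z - α := by simp [hv_def]
    rw [e, star_sub, sub_mul, h1, h3, ← Quaternion.coe_sub]
  have S2 : ∑ j, star (v j) * v j = ((2 * t : ℝ) : ℍ) := by
    have e : ∀ j : Fin r, star (v j) * v j
        = star (v j) * a j - (if j = z then star (v z) * α else 0) := by
      intro j
      by_cases h : j = z <;> simp [hv_def, h, mul_sub]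
    rw [Finset.sum_congr rfl fun j _ => e j, Finset.sum_sub_distrib,
      Finset.sum_ite_eq' Finset.univ z fun _ => star (v z) * α]
    simp only [Finset.mem_univ, if_true, S1, hvzα]
    rw [← Quaternion.coe_sub]
    congr 1
    rw [ht_def]
    ring
  set d : Fin r → ℍ := fun i => if i = z then star u else 1 with hd_def
  have hdz : d z = star u := by simp [hd_def]
  have hdd : ∀ i, d i * star (d i) = 1 := by
    intro i
    by_cases h : i = z <;> simp [hd_def, h, huu]
  have hdd' : ∀ i, star (d i) * d i = 1 := by
    intro i
    by_cases h : i = z <;> simp [hd_def, h, huu']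
  have hD1 : (diagonal d) * (diagonal d)ᴴ = 1 := by
    rw [diagonal_conjTranspose, diagonal_mul_diagonal]
    simp only [Pi.star_apply]
    rw [show (fun i => d i * star (d i)) = fun _ => (1 : ℍ) from funext hdd]
    exact diagonal_one
  have hD2 : (diagonal d)ᴴ * (diagonal d) = 1 := by
    rw [diagonal_conjTranspose, diagonal_mul_diagonal]
    simp only [Pi.star_apply]
    rw [show (fun i => star (d i) * d i) = fun _ => (1 : ℍ) from funext hdd']
    exact diagonal_one
  by_cases ht : t = 0
  · -- degenerate case: a is already supported at z and ‖a z‖ = n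
    have hcases : n = 0 ∨ n = ‖a z‖ := by
      have h0 : n * (n - ‖a z‖) = 0 := by rw [← ht, ht_def]; ring
      rcases mul_eq_zero.1 h0 with h | h
      · exact Or.inl h
      · exact Or.inr (by linarith [sub_eq_zero.1 h])
    have hrest : ∑ i ∈ Finset.univ.erase z, ‖a i‖ ^ 2 = 0 := by
      have hsplit : ‖a z‖ ^ 2 + ∑ i ∈ Finset.univ.erase z, ‖a i‖ ^ 2
          = ∑ i, ‖a i‖ ^ 2 :=
        Finset.add_sum_erase Finset.univ (fun i => ‖a i‖ ^ 2) (Finset.mem_univ z)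
      have hr2 : 0 ≤ ∑ i ∈ Finset.univ.erase z, ‖a i‖ ^ 2 :=
        Finset.sum_nonneg fun i _ => sq_nonneg _
      rcases hcases with h | h
      · have hs0 : ∑ i, ‖a i‖ ^ 2 = 0 := by rw [← hn2, h]; ring
        linarith [sq_nonneg ‖a z‖]
      · rw [h] at hn2
        linarith
    have haz_norm : ‖a z‖ = n := by
      have hsq : ‖a z‖ ^ 2 = n ^ 2 := by
        rw [hn2, ← Finset.add_sum_erase Finset.univ (fun i => ‖a i‖ ^ 2)
          (Finset.mem_univ z), hrest]
        ring
      rw [← Real.sqrt_sq (norm_nonneg (a z)), hsq, Real.sqrt_sq hn_nonneg]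
    have hai : ∀ i, i ≠ z → a i = 0 := by
      intro i hi
      have hmem : i ∈ Finset.univ.erase z := Finset.mem_erase.2 ⟨hi, Finset.mem_univ i⟩
      have h0 := (Finset.sum_eq_zero_iff_of_nonneg
        (fun j _ => sq_nonneg ‖a j‖)).1 hrest i hmem
      have h1 : ‖a i‖ = 0 := pow_eq_zero_iff two_ne_zero |>.1 h0
      simpa using h1
    refine ⟨diagonal d, hD1, hD2, ?_, ?_⟩
    · intro i hi
      rw [Finset.sum_eq_single i (fun j _ hj => by
        simp [diagonal_apply_ne' d hj]) (fun h => absurd (Finset.mem_univ i) h)]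
      simp [hai i hi]
    · rw [Finset.sum_eq_single z (fun j _ hj => by
        simp [diagonal_apply_ne' d hj]) (fun h => absurd (Finset.mem_univ z) h)]
      rw [diagonal_apply_eq, hdz]
      by_cases h : a z = 0
      · have hn0 : n = 0 := by rw [← haz_norm, h, norm_zero]
        simp [h, hn0]
      · have h0 := hazn h
        rw [hu_def, if_neg h, Quaternion.star_smul, smul_mul_assoc,
          star_mul_self'', Quaternion.smul_coe, ← haz_norm]
        congr 1
        field_simp
  · -- Householder case
    set M : Matrix (Fin r) (Fin r) ℍ := Matrix.of fun i j => v i * star (v j) with hM_def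
    set P : Matrix (Fin r) (Fin r) ℍ := 1 - (t⁻¹ : ℝ) • M with hP_def
    have hMH' : ∀ i j, star (M j i) = M i j := by
      intro i j
      simp only [hM_def, Matrix.of_apply, StarMul.star_mul, star_star]
    have hMH : Mᴴ = M := Matrix.ext fun i j => by
      rw [conjTranspose_apply, hMH']
    have hPH : Pᴴ = P := by
      have hsmul : ((t⁻¹ : ℝ) • M)ᴴ = (t⁻¹ : ℝ) • M := by
        refine Matrix.ext fun i j => ?_
        rw [conjTranspose_apply, Matrix.smul_apply, Quaternion.star_smul, Matrix.smul_apply, hMH']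
      rw [hP_def, conjTranspose_sub, conjTranspose_one, hsmul]
    have hMM : M * M = ((2 * t : ℝ)) • M := by
      refine Matrix.ext fun i j => ?_
      rw [mul_apply]
      have e : ∀ k, M i k * M k j = v i * ((star (v k) * v k) * star (v j)) := by
        intro k
        simp only [hM_def, Matrix.of_apply]
        noncomm_ring
      rw [Finset.sum_congr rfl fun k _ => e k, ← Finset.mul_sum, ← Finset.sum_mul, S2]
      rw [Matrix.smul_apply, hM_def, Matrix.of_apply, ← mul_assoc,
        ← Quaternion.coe_commutes, mul_assoc, Quaternion.coe_mul_eq_smul]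
    have hPP : P * P = 1 := by
      rw [hP_def, sub_mul, one_mul, mul_sub, mul_one, smul_mul_assoc, mul_smul_comm,
        hMM, smul_smul, smul_smul]
      have e1 : t⁻¹ * t⁻¹ * (2 * t) = t⁻¹ + t⁻¹ := by
        rw [show t⁻¹ * t⁻¹ * (2 * t) = 2 * t⁻¹ * (t⁻¹ * t) by ring,
          inv_mul_cancel₀ ht]; ring
      rw [e1, add_smul]
      abel
    set H : Matrix (Fin r) (Fin r) ℍ := diagonal d * P with hH_def
    have hH1 : H * Hᴴ = 1 := by
      rw [hH_def, conjTranspose_mul, hPH, mul_assoc, ← mul_assoc P, hPP, one_mul, hD1]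
    have hH2 : Hᴴ * H = 1 := by
      rw [hH_def, conjTranspose_mul, hPH, mul_assoc, ← mul_assoc _ (diagonal d), hD2,
        one_mul, hPP]
    have pcol : ∀ i, ∑ j, P i j * a j = if i = z then α else 0 := by
      intro i
      have expand : ∀ j, P i j * a j
          = (1 : Matrix (Fin r) (Fin r) ℍ) i j * a j
            - (t⁻¹ : ℝ) • (v i * (star (v j) * a j)) := by
        intro j
        simp only [hP_def, Matrix.sub_apply, Matrix.smul_apply, hM_def, Matrix.of_apply, sub_mul,
          smul_mul_assoc, mul_assoc]
      rw [Finset.sum_congr rfl fun j _ => expand j, Finset.sum_sub_distrib,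
        ← Finset.smul_sum, ← Finset.mul_sum, S1]
      have id_sum : ∑ j, (1 : Matrix (Fin r) (Fin r) ℍ) i j * a j = a i := by
        rw [Finset.sum_eq_single i (fun j _ hj => by simp [one_apply_ne' hj])
          (fun h => absurd (Finset.mem_univ i) h)]
        simp
      rw [id_sum, Quaternion.mul_coe_eq_smul, smul_smul, inv_mul_cancel₀ ht, one_smul]
      by_cases h : i = z <;> simp [hv_def, h]
    have hcol : ∀ i, ∑ j, H i j * a j = d i * (if i = z then α else 0) := by
      intro i
      have e : ∀ j, H i j * a j = d i * (P i j * a j) := by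
        intro j
        rw [hH_def, diagonal_mul, mul_assoc]
      rw [Finset.sum_congr rfl fun j _ => e j, ← Finset.mul_sum, pcol]
    refine ⟨H, hH1, hH2, ?_, ?_⟩
    · intro i hi
      rw [hcol i, if_neg hi, mul_zero]
    · rw [hcol z, if_pos rfl, hdz, hα_def, mul_smul_comm, huu, ← Quaternion.coe_one,
        Quaternion.smul_coe, mul_one]

end Aux

/-- **Zeroing the first column** (the basic step of the bidiagonalization, §3 of the
paper): for any `r × c` quaternion matrix `A` (with `r, c ≥ 1`) there is a unitary
quaternion matrix `H` such that the first column of `H A` is `‖a‖ e₁`, where `a` is the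
first column of `A`: all subdiagonal entries vanish and the leading entry is the real
number `‖a‖`. -/
theorem quaternion_householder_zeros_first_column (r c : ℕ) (hr : 1 ≤ r) (hc : 1 ≤ c)
    (A : Matrix (Fin r) (Fin c) (Quaternion ℝ)) :
    ∃ H : Matrix (Fin r) (Fin r) (Quaternion ℝ),
      H * Hᴴ = 1 ∧ Hᴴ * H = 1 ∧
      (∀ i : Fin r, i ≠ ⟨0, hr⟩ → (H * A) i ⟨0, hc⟩ = 0) ∧
      (H * A) ⟨0, hr⟩ ⟨0, hc⟩ =
        ((Real.sqrt (∑ i, ‖A i ⟨0, hc⟩‖ ^ 2) : ℝ) : Quaternion ℝ) := by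
  obtain ⟨H, h1, h2, h3, h4⟩ :=
    householder_key r ⟨0, hr⟩ (fun i => A i ⟨0, hc⟩)
  refine ⟨H, h1, h2, ?_, ?_⟩
  · intro i hi
    rw [Matrix.mul_apply]
    exact h3 i hi
  · rw [Matrix.mul_apply]
    exact h4
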